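/- arXiv:2211.07267 — 4 statements merged into one kernel-verified Lean document; each statement's English description precedes it below -/
import Mathlib

section
/- Suppose the joint pmf of variables (X_v)_{v ∈ V} factorizes according to a tree T = (V, E) as p(x) = ∏_{v ∈ V} p_v(x_v) · ∏_{(u,v) ∈ E} p_{uv}(x_u,x_v)/(p_u(x_u) p_v(x_v)). Then ∑_x p(x) log p(x) = ∑_{v ∈ V} ∑_{x_v} p_v(x_v) log p_v(x_v) + ∑_{(u,v) ∈ E} I(X_u; X_v); i.e., the expected log-likelihood equals the sum of the negative marginal entropies plus the sum of edgewise mutual informations. -/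
open Finset Real Classical

private lemma marg_aux {V : Type*} [Fintype V] [DecidableEq V] {β : V → Type*}
    [∀ v, Fintype (β v)] (p : (∀ v, β v) → ℝ) (v : V) (f : β v → ℝ) :
    ∑ x, p x * f (x v) = ∑ y, (∑ x, if x v = y then p x else 0) * f y := by
  simp_rw [Finset.sum_mul, ite_mul, zero_mul]
  rw [Finset.sum_comm]
  simp

private lemma marg2_aux {V : Type*} [Fintype V] [DecidableEq V] {β : V → Type*}
    [∀ v, Fintype (β v)] (p : (∀ v, β v) → ℝ) (u v : V) (g : β u → β v → ℝ) :
    ∑ x, p x * g (x u) (x v)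
      = ∑ a, ∑ b, (∑ x, if x u = a ∧ x v = b then p x else 0) * g a b := by
  symm
  calc ∑ a, ∑ b, (∑ x, if x u = a ∧ x v = b then p x else 0) * g a b
      = ∑ a, ∑ b, ∑ x, (if x u = a ∧ x v = b then p x else 0) * g a b := by
        simp_rw [Finset.sum_mul]
    _ = ∑ a, ∑ x, ∑ b, (if x u = a ∧ x v = b then p x else 0) * g a b :=
        Finset.sum_congr rfl fun a _ => Finset.sum_comm
    _ = ∑ x, ∑ a, ∑ b, (if x u = a ∧ x v = b then p x else 0) * g a b := Finset.sum_comm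
    _ = ∑ x, p x * g (x u) (x v) := by
        refine Finset.sum_congr rfl fun x _ => ?_
        simp [ite_and, ite_mul, zero_mul, Finset.sum_ite_eq]

theorem tree_factorization_expected_loglik
    {V : Type*} [Fintype V] [DecidableEq V] {β : V → Type*} [∀ v, Fintype (β v)]
    (p : (∀ v, β v) → ℝ)
    (hpos : ∀ x, 0 < p x) (hsum : ∑ x, p x = 1)
    (pv : ∀ v, β v → ℝ)
    (hpv : ∀ v (y : β v), pv v y = ∑ x, if x v = y then p x else 0)
    (puv : ∀ u v : V, β u → β v → ℝ)
    (hpuv : ∀ u v (a : β u) (b : β v),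
      puv u v a b = ∑ x, if x u = a ∧ x v = b then p x else 0)
    (hpvpos : ∀ v (y : β v), 0 < pv v y)
    (E : Finset (V × V))
    (hirr : ∀ e ∈ E, e.1 ≠ e.2)
    (hanti : ∀ u v : V, (u, v) ∈ E → (v, u) ∉ E)
    (htree : (SimpleGraph.fromRel (fun u v => (u, v) ∈ E)).IsTree)
    (hfact : ∀ x, p x = (∏ v, pv v (x v)) *
      ∏ e ∈ E, puv e.1 e.2 (x e.1) (x e.2) / (pv e.1 (x e.1) * pv e.2 (x e.2))) :
    ∑ x, p x * Real.log (p x)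
      = (∑ v, ∑ y : β v, pv v y * Real.log (pv v y))
        + ∑ e ∈ E, ∑ a : β e.1, ∑ b : β e.2,
            puv e.1 e.2 a b * Real.log (puv e.1 e.2 a b / (pv e.1 a * pv e.2 b)) := by
  -- a point exists
  obtain ⟨x0, _, hx0⟩ := Finset.exists_ne_zero_of_sum_ne_zero (by rw [hsum]; norm_num :
    ∑ x ∈ Finset.univ, p x ≠ 0)
  -- positivity of puv for irreflexive pairs
  have hpuvpos : ∀ (u v : V), u ≠ v → ∀ (a : β u) (b : β v), 0 < puv u v a b := by
    intro u v huv a b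
    rw [hpuv]
    set x : ∀ w, β w := Function.update (Function.update x0 u a) v b with hx
    have hxu : x u = a := by
      simp [hx, Function.update_of_ne huv, Function.update_self]
    have hxv : x v = b := by simp [hx]
    refine Finset.sum_pos' (fun y _ => by split_ifs with h; exacts [(hpos y).le, le_rfl]) ⟨x, Finset.mem_univ x, ?_⟩
    rw [if_pos ⟨hxu, hxv⟩]; exact hpos x
  -- log expansion
  have hlog : ∀ x, Real.log (p x) = (∑ v, Real.log (pv v (x v))) +
      ∑ e ∈ E, Real.log (puv e.1 e.2 (x e.1) (x e.2) /
        (pv e.1 (x e.1) * pv e.2 (x e.2))) := by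
    intro x
    rw [hfact x, Real.log_mul, Real.log_prod, Real.log_prod]
    · intro e he
      have := hpuvpos e.1 e.2 (hirr e he) (x e.1) (x e.2)
      have h1 := hpvpos e.1 (x e.1); have h2 := hpvpos e.2 (x e.2)
      positivity
    · intro v _; exact (hpvpos v (x v)).ne'
    · exact (Finset.prod_pos (fun v _ => hpvpos v (x v))).ne'
    · refine (Finset.prod_pos (fun e he => ?_)).ne'
      have := hpuvpos e.1 e.2 (hirr e he) (x e.1) (x e.2)
      have h1 := hpvpos e.1 (x e.1); have h2 := hpvpos e.2 (x e.2)
      positivity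
  calc ∑ x, p x * Real.log (p x)
      = ∑ x, ((∑ v, p x * Real.log (pv v (x v))) +
          ∑ e ∈ E, p x * Real.log (puv e.1 e.2 (x e.1) (x e.2) /
            (pv e.1 (x e.1) * pv e.2 (x e.2)))) := by
        refine Finset.sum_congr rfl fun x _ => ?_
        rw [hlog x, mul_add, Finset.mul_sum, Finset.mul_sum]
    _ = (∑ v, ∑ x, p x * Real.log (pv v (x v))) +
        ∑ e ∈ E, ∑ x, p x * Real.log (puv e.1 e.2 (x e.1) (x e.2) /
            (pv e.1 (x e.1) * pv e.2 (x e.2))) := by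
        rw [Finset.sum_add_distrib, Finset.sum_comm, Finset.sum_comm (s := Finset.univ) (t := E)]
    _ = _ := by
        congr 1
        · refine Finset.sum_congr rfl fun v _ => ?_
          rw [marg_aux p v (fun y => Real.log (pv v y))]
          exact Finset.sum_congr rfl fun y _ => by rw [← hpv]
        · refine Finset.sum_congr rfl fun e he => ?_
          rw [marg2_aux p e.1 e.2 (fun a b => Real.log (puv e.1 e.2 a b /
            (pv e.1 a * pv e.2 b)))]
          exact Finset.sum_congr rfl fun a _ => Finset.sum_congr rfl fun b _ => by
            rw [← hpuv]
end

section
/- Among all probability distributions factorizing according to spanning trees of a complete graph on a finite vertex set, the expected log-likelihood of a tree-factorized approximation is maximized by the spanning tree maximizing the total edge weight ∑_{(u,v)∈E} I(X_u;X_v); i.e., for two trees T₁, T₂, if ∑_{e∈E(T₁)} I_e ≥ ∑_{e∈E(T₂)} I_e then the T₁-factorized approximation has expected log-likelihood at least that of T₂. -/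
open Finset Real Classical

theorem chow_liu_max_weight_tree_maximizes_expected_loglik
    {V : Type*} [Fintype V] [DecidableEq V] {β : V → Type*} [∀ v, Fintype (β v)]
    (p : (∀ v, β v) → ℝ)
    (hpos : ∀ x, 0 < p x) (hsum : ∑ x, p x = 1)
    (pv : ∀ v, β v → ℝ)
    (hpv : ∀ v (y : β v), pv v y = ∑ x, if x v = y then p x else 0)
    (puv : ∀ u v : V, β u → β v → ℝ)
    (hpuv : ∀ u v (a : β u) (b : β v),
      puv u v a b = ∑ x, if x u = a ∧ x v = b then p x else 0)
    (hpvpos : ∀ v (y : β v), 0 < pv v y)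
    -- the tree approximation to `p` determined by an edge set `E`
    (pT : Finset (V × V) → (∀ v, β v) → ℝ)
    (hpT : ∀ (E : Finset (V × V)) x, pT E x = (∏ v, pv v (x v)) *
      ∏ e ∈ E, puv e.1 e.2 (x e.1) (x e.2) / (pv e.1 (x e.1) * pv e.2 (x e.2)))
    -- the edgewise mutual information computed from the true marginals of `p`
    (I : V × V → ℝ)
    (hI : ∀ e : V × V, I e = ∑ a : β e.1, ∑ b : β e.2,
      puv e.1 e.2 a b * Real.log (puv e.1 e.2 a b / (pv e.1 a * pv e.2 b)))
    -- two spanning trees, each given by an edge set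
    (E₁ E₂ : Finset (V × V))
    (hirr₁ : ∀ e ∈ E₁, e.1 ≠ e.2) (hanti₁ : ∀ u v : V, (u, v) ∈ E₁ → (v, u) ∉ E₁)
    (htree₁ : (SimpleGraph.fromRel (fun u v => (u, v) ∈ E₁)).IsTree)
    (hirr₂ : ∀ e ∈ E₂, e.1 ≠ e.2) (hanti₂ : ∀ u v : V, (u, v) ∈ E₂ → (v, u) ∉ E₂)
    (htree₂ : (SimpleGraph.fromRel (fun u v => (u, v) ∈ E₂)).IsTree)
    (hweight : ∑ e ∈ E₂, I e ≤ ∑ e ∈ E₁, I e) :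
    ∑ x, p x * Real.log (pT E₂ x) ≤ ∑ x, p x * Real.log (pT E₁ x) := by
  -- positivity of pairwise marginals on realizable values
  have hpuvpos : ∀ (u v : V) (x : ∀ v, β v), 0 < puv u v (x u) (x v) := by
    intro u v x
    rw [hpuv]
    apply Finset.sum_pos'
    · intro i _
      split <;> [exact (hpos i).le; exact le_rfl]
    · exact ⟨x, Finset.mem_univ x, by simp [hpos x]⟩
  -- the per-edge expected log-ratio equals the mutual information
  have hedge : ∀ e : V × V,
      ∑ x, p x * Real.log (puv e.1 e.2 (x e.1) (x e.2) /
        (pv e.1 (x e.1) * pv e.2 (x e.2))) = I e := by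
    intro e
    rw [hI]
    have h1 : ∀ (a : β e.1) (b : β e.2),
        puv e.1 e.2 a b * Real.log (puv e.1 e.2 a b / (pv e.1 a * pv e.2 b))
        = ∑ x, if x e.1 = a ∧ x e.2 = b then
            p x * Real.log (puv e.1 e.2 a b / (pv e.1 a * pv e.2 b)) else 0 := by
      intro a b
      rw [hpuv, Finset.sum_mul]
      apply Finset.sum_congr rfl
      intro x _
      split <;> simp
    simp_rw [h1]
    rw [Finset.sum_comm]
    have h2 : ∀ b : β e.2, (∑ a : β e.1, ∑ x, if x e.1 = a ∧ x e.2 = b then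
        p x * Real.log (puv e.1 e.2 a b / (pv e.1 a * pv e.2 b)) else 0)
        = ∑ x, ∑ a : β e.1, if x e.1 = a ∧ x e.2 = b then
        p x * Real.log (puv e.1 e.2 a b / (pv e.1 a * pv e.2 b)) else 0 :=
      fun b => Finset.sum_comm
    simp_rw [h2]
    rw [Finset.sum_comm]
    apply Finset.sum_congr rfl
    intro x _
    simp [ite_and, Finset.sum_ite_eq]
  -- decomposition of the expected log-likelihood
  have key : ∀ E : Finset (V × V),
      ∑ x, p x * Real.log (pT E x)
        = (∑ x, p x * Real.log (∏ v, pv v (x v))) + ∑ e ∈ E, I e := by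
    intro E
    have hlog : ∀ x, Real.log (pT E x) = Real.log (∏ v, pv v (x v)) +
        ∑ e ∈ E, Real.log (puv e.1 e.2 (x e.1) (x e.2) /
          (pv e.1 (x e.1) * pv e.2 (x e.2))) := by
      intro x
      have hA : (∏ v, pv v (x v)) ≠ 0 :=
        ne_of_gt (Finset.prod_pos fun v _ => hpvpos v (x v))
      have hB : ∀ e ∈ E, puv e.1 e.2 (x e.1) (x e.2) /
          (pv e.1 (x e.1) * pv e.2 (x e.2)) ≠ 0 := fun e _ =>
        ne_of_gt (div_pos (hpuvpos e.1 e.2 x)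
          (mul_pos (hpvpos e.1 (x e.1)) (hpvpos e.2 (x e.2))))
      rw [hpT, Real.log_mul hA (ne_of_gt (Finset.prod_pos fun e he =>
        lt_of_le_of_ne (le_of_lt (div_pos (hpuvpos e.1 e.2 x)
          (mul_pos (hpvpos e.1 (x e.1)) (hpvpos e.2 (x e.2))))) (Ne.symm (hB e he))))]
      congr 1
      exact Real.log_prod hB
    simp_rw [hlog, mul_add, Finset.sum_add_distrib, Finset.mul_sum]
    rw [Finset.sum_comm]
    congr 1
    exact Finset.sum_congr rfl fun e _ => hedge e
  rw [key E₁, key E₂]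
  linarith
end

section
/- For a GLM density f(y|x) = exp( (yθ − b(θ))/a(φ) + c(y,φ) ) with natural parameter θ = θ(X) random through X, the symmetric KL divergence between the joint density f(x,y) and the independence product f(x)f(y) equals Cov(θ(X), Y)/a(φ). -/
open Finset Real

theorem glm_symmetric_kl_eq_cov_div_dispersion
    {α β : Type*} [Fintype α] [Fintype β]
    (val : β → ℝ)                      -- numeric values of the response Y
    (θ : α → ℝ) (aφ : ℝ) (haφ : 0 < aφ) (b : ℝ → ℝ) (c : β → ℝ)
    (pX : α → ℝ) (hpXpos : ∀ x, 0 < pX x) (hpX1 : ∑ x, pX x = 1)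
    (cond : α → β → ℝ)
    (hcond : ∀ x y, cond x y = Real.exp ((val y * θ x - b (θ x)) / aφ + c y))
    (hcond1 : ∀ x, ∑ y, cond x y = 1)
    (p : α → β → ℝ) (hp : ∀ x y, p x y = pX x * cond x y)
    (pY : β → ℝ) (hpY : ∀ y, pY y = ∑ x, p x y)
    (q : α → β → ℝ) (hq : ∀ x y, q x y = pX x * pY y)
    (Cov : ℝ)
    (hCov : Cov = (∑ x, ∑ y, p x y * (θ x * val y))
      - (∑ x, pX x * θ x) * (∑ y, pY y * val y)) :
    (∑ x, ∑ y, p x y * Real.log (p x y / q x y))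
      + (∑ x, ∑ y, q x y * Real.log (q x y / p x y)) = Cov / aφ := by
  have hα : Nonempty α := by
    by_contra h
    rw [not_nonempty_iff] at h
    rw [Finset.univ_eq_empty, Finset.sum_empty] at hpX1
    exact one_ne_zero hpX1.symm
  have hcondpos : ∀ x y, 0 < cond x y := fun x y => by rw [hcond]; positivity
  have hpYpos : ∀ y, 0 < pY y := fun y => by
    rw [hpY]
    exact Finset.sum_pos (fun x _ => by
      rw [hp]; exact mul_pos (hpXpos x) (hcondpos x y)) Finset.univ_nonempty
  have hppos : ∀ x y, 0 < p x y := fun x y => by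
    rw [hp]; exact mul_pos (hpXpos x) (hcondpos x y)
  have hqpos : ∀ x y, 0 < q x y := fun x y => by
    rw [hq]; exact mul_pos (hpXpos x) (hpYpos y)
  -- marginals
  have hpx : ∀ x, ∑ y, p x y = pX x := fun x => by
    simp only [hp, ← Finset.mul_sum, hcond1, mul_one]
  have hsumpY : ∑ y, pY y = 1 := by
    simp only [hpY]
    rw [Finset.sum_comm]
    simp only [hpx]
    exact hpX1
  have hqx : ∀ x, ∑ y, q x y = pX x := fun x => by
    simp only [hq, ← Finset.mul_sum, hsumpY, mul_one]
  have hpy : ∀ y, ∑ x, p x y = pY y := fun y => (hpY y).symm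
  have hqy : ∀ y, ∑ x, q x y = pY y := fun y => by
    simp only [hq]
    rw [← Finset.sum_mul, hpX1, one_mul]
  -- log formula
  have hlog : ∀ x y, Real.log (p x y / q x y)
      = (θ x * val y) / aφ + ((c y - Real.log (pY y)) + (- b (θ x) / aφ)) := by
    intro x y
    rw [Real.log_div (hppos x y).ne' (hqpos x y).ne', hp, hq,
      Real.log_mul (hpXpos x).ne' (hcondpos x y).ne',
      Real.log_mul (hpXpos x).ne' (hpYpos y).ne', hcond, Real.log_exp]
    ring
  have hlogq : ∀ x y, Real.log (q x y / p x y) = - Real.log (p x y / q x y) := by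
    intro x y
    rw [Real.log_div (hqpos x y).ne' (hppos x y).ne',
        Real.log_div (hppos x y).ne' (hqpos x y).ne']
    ring
  have key : (∑ x, ∑ y, p x y * Real.log (p x y / q x y))
      + (∑ x, ∑ y, q x y * Real.log (q x y / p x y))
      = (∑ x, ∑ y, (p x y * (θ x * val y) - q x y * (θ x * val y)) / aφ)
        + ((∑ x, ∑ y, (p x y - q x y) * (c y - Real.log (pY y)))
          + (∑ x, ∑ y, (p x y - q x y) * (- b (θ x) / aφ))) := by
    rw [← Finset.sum_add_distrib, ← Finset.sum_add_distrib, ← Finset.sum_add_distrib]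
    refine Finset.sum_congr rfl fun x _ => ?_
    rw [← Finset.sum_add_distrib, ← Finset.sum_add_distrib, ← Finset.sum_add_distrib]
    refine Finset.sum_congr rfl fun y _ => ?_
    rw [hlogq, hlog]; ring
  rw [key]
  have hB : (∑ x, ∑ y, (p x y - q x y) * (c y - Real.log (pY y))) = 0 := by
    rw [Finset.sum_comm]
    refine Finset.sum_eq_zero fun y _ => ?_
    rw [← Finset.sum_mul, Finset.sum_sub_distrib, hpy, hqy, sub_self, zero_mul]
  have hC : (∑ x, ∑ y, (p x y - q x y) * (- b (θ x) / aφ)) = 0 := by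
    refine Finset.sum_eq_zero fun x _ => ?_
    rw [← Finset.sum_mul, Finset.sum_sub_distrib, hpx, hqx, sub_self, zero_mul]
  rw [hB, hC]
  have hqsum : (∑ x, ∑ y, q x y * (θ x * val y))
      = (∑ x, pX x * θ x) * (∑ y, pY y * val y) := by
    rw [Finset.sum_mul]
    refine Finset.sum_congr rfl fun x _ => ?_
    rw [Finset.mul_sum]
    refine Finset.sum_congr rfl fun y _ => ?_
    rw [hq]; ring
  have : (∑ x, ∑ y, (p x y * (θ x * val y) - q x y * (θ x * val y)) / aφ)
      = ((∑ x, ∑ y, p x y * (θ x * val y)) - (∑ x, ∑ y, q x y * (θ x * val y))) / aφ := by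
    simp only [sub_div, Finset.sum_sub_distrib, Finset.sum_div]
  rw [this, hqsum, hCov]
  ring
end

section
/- In the GLM setting, the entropy coefficient EC = Cov(θ(X),Y)/a(φ) is nonnegative, and EC = 0 if and only if X and Y are independent. -/
open Finset Real

lemma sign_nonneg' {a b : ℝ} (ha : 0 < a) (hb : 0 < b) :
    0 ≤ (a - b) * (Real.log a - Real.log b) := by
  rcases le_total a b with h | h
  · have hl : Real.log a ≤ Real.log b := Real.log_le_log ha h
    nlinarith
  · have hl : Real.log b ≤ Real.log a := Real.log_le_log hb h
    exact mul_nonneg (sub_nonneg.2 h) (sub_nonneg.2 hl)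

lemma sign_eq' {a b : ℝ} (ha : 0 < a) (hb : 0 < b)
    (h : (a - b) * (Real.log a - Real.log b) = 0) : a = b := by
  by_contra hne
  rcases lt_or_gt_of_ne hne with hlt | hlt
  · have := Real.log_lt_log ha hlt; nlinarith
  · have := Real.log_lt_log hb hlt; nlinarith

theorem glm_entropy_coefficient_nonneg_iff_indep
    {α β : Type*} [Fintype α] [Fintype β]
    (val : β → ℝ)                      -- numeric values of the response Y
    (θ : α → ℝ) (aφ : ℝ) (haφ : 0 < aφ) (b : ℝ → ℝ) (c : β → ℝ)
    (pX : α → ℝ) (hpXpos : ∀ x, 0 < pX x) (hpX1 : ∑ x, pX x = 1)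
    (cond : α → β → ℝ)
    (hcond : ∀ x y, cond x y = Real.exp ((val y * θ x - b (θ x)) / aφ + c y))
    (hcond1 : ∀ x, ∑ y, cond x y = 1)
    (p : α → β → ℝ) (hp : ∀ x y, p x y = pX x * cond x y)
    (pY : β → ℝ) (hpY : ∀ y, pY y = ∑ x, p x y)
    (Cov : ℝ)
    (hCov : Cov = (∑ x, ∑ y, p x y * (θ x * val y))
      - (∑ x, pX x * θ x) * (∑ y, pY y * val y))
    (EC : ℝ) (hEC : EC = Cov / aφ) :
    0 ≤ EC ∧ (EC = 0 ↔ ∀ x y, p x y = pX x * pY y) := by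
  have hne : (Finset.univ : Finset α).Nonempty := by
    rcases Finset.univ.eq_empty_or_nonempty (α := α) with h | h
    · rw [show (∑ x, pX x) = ∑ x ∈ (Finset.univ : Finset α), pX x from rfl, h] at hpX1
      simp at hpX1
    · exact h
  have hppos : ∀ x y, 0 < p x y := fun x y => by
    rw [hp x y, hcond x y]; exact mul_pos (hpXpos x) (Real.exp_pos _)
  have hpYpos : ∀ y, 0 < pY y := fun y => by
    rw [hpY]; exact Finset.sum_pos (fun x _ => hppos x y) hne
  have hqpos : ∀ x y, 0 < pX x * pY y := fun x y => mul_pos (hpXpos x) (hpYpos y)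
  have hrowp : ∀ x, ∑ y, p x y = pX x := fun x => by
    simp only [hp]; rw [← Finset.mul_sum, hcond1, mul_one]
  have hpY1 : ∑ y, pY y = 1 := by
    simp only [hpY]; rw [Finset.sum_comm]; simp only [hrowp]; exact hpX1
  have hrow0 : ∀ x, ∑ y, (p x y - pX x * pY y) = 0 := fun x => by
    rw [Finset.sum_sub_distrib, hrowp, ← Finset.mul_sum, hpY1, mul_one, sub_self]
  have hcol0 : ∀ y, ∑ x, (p x y - pX x * pY y) = 0 := fun y => by
    rw [Finset.sum_sub_distrib, ← hpY, ← Finset.sum_mul, hpX1, one_mul, sub_self]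
  have hlog : ∀ x y, Real.log (p x y) - Real.log (pX x * pY y)
      = θ x * val y / aφ + (-(b (θ x)) / aφ) + (c y - Real.log (pY y)) := by
    intro x y
    rw [hp, Real.log_mul (hpXpos x).ne' (by rw [hcond]; exact (Real.exp_pos _).ne'),
      hcond, Real.log_exp, Real.log_mul (hpXpos x).ne' (hpYpos y).ne']
    field_simp
    ring
  have key : EC = ∑ x, ∑ y, (p x y - pX x * pY y)
      * (Real.log (p x y) - Real.log (pX x * pY y)) := by
    have expand : ∀ x y, (p x y - pX x * pY y)
        * (Real.log (p x y) - Real.log (pX x * pY y))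
        = (p x y * (θ x * val y) - (pX x * pY y) * (θ x * val y)) / aφ
          + (p x y - pX x * pY y) * (-(b (θ x)) / aφ)
          + (p x y - pX x * pY y) * (c y - Real.log (pY y)) := by
      intro x y; rw [hlog]; field_simp
    have piece2 : ∑ x, ∑ y, (p x y - pX x * pY y) * (-(b (θ x)) / aφ) = 0 := by
      apply Finset.sum_eq_zero; intro x _
      rw [← Finset.sum_mul, hrow0, zero_mul]
    have piece3 : ∑ x, ∑ y, (p x y - pX x * pY y) * (c y - Real.log (pY y)) = 0 := by
      rw [Finset.sum_comm]
      apply Finset.sum_eq_zero; intro y _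
      rw [← Finset.sum_mul, hcol0, zero_mul]
    have hq_sum : ∑ x, ∑ y, (pX x * pY y) * (θ x * val y)
        = (∑ x, pX x * θ x) * (∑ y, pY y * val y) := by
      rw [Finset.sum_mul]
      refine Finset.sum_congr rfl fun x _ => ?_
      rw [Finset.mul_sum]
      refine Finset.sum_congr rfl fun y _ => ?_
      ring
    have piece1 : ∑ x, ∑ y,
        (p x y * (θ x * val y) - (pX x * pY y) * (θ x * val y)) / aφ = EC := by
      simp only [← Finset.sum_div, Finset.sum_sub_distrib]
      rw [hq_sum, hEC, hCov]
    have sum_eq : ∑ x, ∑ y, (p x y - pX x * pY y)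
        * (Real.log (p x y) - Real.log (pX x * pY y))
        = (∑ x, ∑ y, (p x y * (θ x * val y) - (pX x * pY y) * (θ x * val y)) / aφ)
          + (∑ x, ∑ y, (p x y - pX x * pY y) * (-(b (θ x)) / aφ))
          + (∑ x, ∑ y, (p x y - pX x * pY y) * (c y - Real.log (pY y))) := by
      simp only [expand, Finset.sum_add_distrib]
    rw [sum_eq, piece1, piece2, piece3, add_zero, add_zero]
  constructor
  · rw [key]
    exact Finset.sum_nonneg fun x _ => Finset.sum_nonneg fun y _ =>
      sign_nonneg' (hppos x y) (hqpos x y)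
  · constructor
    · intro h x y
      rw [key] at h
      have h1 := (Finset.sum_eq_zero_iff_of_nonneg (fun x _ =>
        Finset.sum_nonneg fun y _ => sign_nonneg' (hppos x y) (hqpos x y))).mp h x
        (Finset.mem_univ x)
      have h2 := (Finset.sum_eq_zero_iff_of_nonneg (fun y _ =>
        sign_nonneg' (hppos x y) (hqpos x y))).mp h1 y (Finset.mem_univ y)
      exact sign_eq' (hppos x y) (hqpos x y) h2
    · intro h
      rw [key]
      apply Finset.sum_eq_zero; intro x _
      apply Finset.sum_eq_zero; intro y _
      rw [h x y, sub_self, zero_mul]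
end
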